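/- Let g : ℝⁿ → ℝ be L-smooth with constant L_{∇g} > 0, let λ ∈ ℝ, α ≥ 0 and z ∈ ℝ^d. Let x̂₁, x̂₂, x̃₁, x̃₂ ∈ ℝⁿ and ε₁, ε₂ ≥ 0 with ‖x̂₁ − x̃₁‖ ≤ ε₁ and ‖x̂₂ − x̃₂‖ ≤ ε₂. Define Ū(x, ε) = g(x) + ‖∇g(x)‖ ε + (L_{∇g}/2) ε², U̲(x, ε) = g(x) − ‖∇g(x)‖ ε − (L_{∇g}/2) ε², and ψ(α) = Ū(x̃₂, ε₂) − U̲(x̃₁, ε₁) + λ α ‖z‖². If ψ(α) ≤ 0, then g(x̂₂) − g(x̂₁) ≤ −λ α ‖z‖². -/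

import Mathlib

open scoped RealInnerProductSpace

lemma myLineDeriv {n : ℕ} (g : EuclideanSpace ℝ (Fin n) → ℝ)
    (hdiff : Differentiable ℝ g) (y v : EuclideanSpace ℝ (Fin n)) (t : ℝ) :
    HasDerivAt (fun s : ℝ => g (y + s • v)) ⟪gradient g (y + t • v), v⟫ t := by
  have hline : HasDerivAt (fun s : ℝ => y + s • v) v t := by
    simpa using ((hasDerivAt_id t).smul_const v).const_add y
  have hg : HasGradientAt g (gradient g (y + t • v)) (y + t • v) :=
    (hdiff (y + t • v)).hasGradientAt
  have := (hasGradientAt_iff_hasFDerivAt.1 hg).comp_hasDerivAt t hline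
  simpa [Function.comp_def] using this

lemma descent {n : ℕ} (g : EuclideanSpace ℝ (Fin n) → ℝ) (Lg : ℝ)
    (hdiff : Differentiable ℝ g)
    (hlip : ∀ x y, ‖gradient g x - gradient g y‖ ≤ Lg * ‖x - y‖)
    (x y : EuclideanSpace ℝ (Fin n)) :
    |g x - g y - ⟪gradient g y, x - y⟫| ≤ Lg / 2 * ‖x - y‖ ^ 2 := by
  set v := x - y with hv
  set f : ℝ → ℝ := fun t => g (y + t • v) - t * ⟪gradient g y, v⟫ with hf
  have hder : ∀ t : ℝ, HasDerivAt f
      (⟪gradient g (y + t • v) - gradient g y, v⟫) t := by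
    intro t
    have h1 := myLineDeriv g hdiff y v t
    have h2 : HasDerivAt (fun s : ℝ => s * ⟪gradient g y, v⟫) ⟪gradient g y, v⟫ t := by
      simpa using (hasDerivAt_id t).mul_const _
    rw [inner_sub_left]
    exact h1.sub h2
  have key : ∀ t ∈ Set.Icc (0:ℝ) 1, ‖f t - f 0‖ ≤ Lg / 2 * t ^ 2 * ‖v‖ ^ 2 := by
    have := image_norm_le_of_norm_deriv_right_le_deriv_boundary
      (f := fun t => f t - f 0) (a := 0) (b := 1)
      (f' := fun t => ⟪gradient g (y + t • v) - gradient g y, v⟫)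
      (B := fun t => Lg / 2 * t ^ 2 * ‖v‖ ^ 2)
      (B' := fun t => Lg * t * ‖v‖ ^ 2)
      (fun t _ => (((hder t).sub_const (f 0)).continuousAt).continuousWithinAt)
      (fun t _ => ((hder t).sub_const (f 0)).hasDerivWithinAt)
      (by simp)
      (fun t => by
        have : HasDerivAt (fun t : ℝ => Lg / 2 * t ^ 2 * ‖v‖ ^ 2)
            (Lg * t * ‖v‖ ^ 2) t := by
          have := ((hasDerivAt_pow 2 t).const_mul (Lg / 2)).mul_const (‖v‖ ^ 2)
          refine this.congr_deriv ?_
          rw [show (2:ℕ) - 1 = 1 from rfl, pow_one]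
          ring
        exact this)
      (fun t ht => by
        have hCS := abs_real_inner_le_norm (gradient g (y + t • v) - gradient g y) v
        have hL := hlip (y + t • v) y
        have : ‖y + t • v - y‖ = t * ‖v‖ := by
          rw [add_sub_cancel_left, norm_smul, Real.norm_eq_abs, abs_of_nonneg ht.1]
        rw [this] at hL
        calc ‖⟪gradient g (y + t • v) - gradient g y, v⟫‖
            ≤ ‖gradient g (y + t • v) - gradient g y‖ * ‖v‖ := hCS
          _ ≤ Lg * (t * ‖v‖) * ‖v‖ := by
              apply mul_le_mul_of_nonneg_right hL (norm_nonneg _)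
          _ = Lg * t * ‖v‖ ^ 2 := by ring)
    intro t ht
    have := this ht
    simpa using this
  have h1 := key 1 (by norm_num)
  have hf1 : f 1 - f 0 = g x - g y - ⟪gradient g y, v⟫ := by
    simp only [hf, one_smul, zero_smul, add_zero, zero_mul, sub_zero, one_mul, hv, add_sub_cancel]
    ring
  rw [hf1] at h1
  simpa [Real.norm_eq_abs] using h1

lemma upper_bd {n : ℕ} (g : EuclideanSpace ℝ (Fin n) → ℝ) (Lg : ℝ) (hLg : 0 < Lg)
    (hdiff : Differentiable ℝ g)
    (hlip : ∀ x y, ‖gradient g x - gradient g y‖ ≤ Lg * ‖x - y‖)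
    (xh xt : EuclideanSpace ℝ (Fin n)) (ε : ℝ) (hε : 0 ≤ ε) (h : ‖xh - xt‖ ≤ ε) :
    |g xh - g xt| ≤ ‖gradient g xt‖ * ε + Lg / 2 * ε ^ 2 := by
  have hd := descent g Lg hdiff hlip xh xt
  have hCS := abs_real_inner_le_norm (gradient g xt) (xh - xt)
  have h1 : ‖gradient g xt‖ * ‖xh - xt‖ ≤ ‖gradient g xt‖ * ε :=
    mul_le_mul_of_nonneg_left h (norm_nonneg _)
  have h2 : Lg / 2 * ‖xh - xt‖ ^ 2 ≤ Lg / 2 * ε ^ 2 := by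
    apply mul_le_mul_of_nonneg_left _ (by linarith)
    exact pow_le_pow_left₀ (norm_nonneg _) h 2
  have := abs_sub_abs_le_abs_sub (g xh - g xt) ⟪gradient g xt, xh - xt⟫
  have habs := abs_abs_sub_abs_le_abs_sub (g xh - g xt) ⟪gradient g xt, xh - xt⟫
  calc |g xh - g xt| ≤ |⟪gradient g xt, xh - xt⟫| + |g xh - g xt - ⟪gradient g xt, xh - xt⟫| := by
        have := abs_sub_abs_le_abs_sub (g xh - g xt) ⟪gradient g xt, xh - xt⟫
        have h3 := abs_add_le ⟪gradient g xt, xh - xt⟫ (g xh - g xt - ⟪gradient g xt, xh - xt⟫)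
        simpa using h3
    _ ≤ ‖gradient g xt‖ * ε + Lg / 2 * ε ^ 2 := by
        apply add_le_add _ (le_trans hd h2)
        exact le_trans hCS h1

theorem inexact_line_search_sufficient_decrease
    {n d : ℕ} (g : EuclideanSpace ℝ (Fin n) → ℝ) (Lg : ℝ) (hLg : 0 < Lg)
    (hdiff : Differentiable ℝ g)
    (hlip : ∀ x y, ‖gradient g x - gradient g y‖ ≤ Lg * ‖x - y‖)
    (lam α : ℝ) (hα : 0 ≤ α) (z : EuclideanSpace ℝ (Fin d))
    (xhat₁ xhat₂ xtilde₁ xtilde₂ : EuclideanSpace ℝ (Fin n))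
    (ε₁ ε₂ : ℝ) (hε₁ : 0 ≤ ε₁) (hε₂ : 0 ≤ ε₂)
    (happrox₁ : ‖xhat₁ - xtilde₁‖ ≤ ε₁) (happrox₂ : ‖xhat₂ - xtilde₂‖ ≤ ε₂)
    (hψ : (g xtilde₂ + ‖gradient g xtilde₂‖ * ε₂ + Lg / 2 * ε₂ ^ 2)
        - (g xtilde₁ - ‖gradient g xtilde₁‖ * ε₁ - Lg / 2 * ε₁ ^ 2)
        + lam * α * ‖z‖ ^ 2 ≤ 0) :
    g xhat₂ - g xhat₁ ≤ -(lam * α * ‖z‖ ^ 2) := by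
  have h1 := abs_le.1 (upper_bd g Lg hLg hdiff hlip xhat₁ xtilde₁ ε₁ hε₁ happrox₁)
  have h2 := abs_le.1 (upper_bd g Lg hLg hdiff hlip xhat₂ xtilde₂ ε₂ hε₂ happrox₂)
  linarith [h1.1, h2.2]
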